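/- For a Euclidean triangle with angles α, β, γ opposite to sides a, b, c, the partial derivative of α with respect to a equals 1/(b sin γ), and the partial derivative of α with respect to b equals −(cot γ)/b. -/

import Mathlib

open Real

/-- For a Euclidean triangle with angles α, β, γ opposite to sides a, b, c
(determined by the law of cosines), ∂α/∂a = 1/(b sin γ) and ∂α/∂b = −(cot γ)/b. -/
theorem euclidean_angle_derivs
    (a b c : ℝ) (ha : 0 < a) (hb : 0 < b) (hc : 0 < c)
    (h1 : a < b + c) (h2 : b < a + c) (h3 : c < a + b) :
    HasDerivAt (fun s => arccos ((b ^ 2 + c ^ 2 - s ^ 2) / (2 * b * c)))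
      (1 / (b * sin (arccos ((a ^ 2 + b ^ 2 - c ^ 2) / (2 * a * b))))) a ∧
    HasDerivAt (fun s => arccos ((s ^ 2 + c ^ 2 - a ^ 2) / (2 * s * c)))
      (-(cos (arccos ((a ^ 2 + b ^ 2 - c ^ 2) / (2 * a * b))) /
          sin (arccos ((a ^ 2 + b ^ 2 - c ^ 2) / (2 * a * b)))) / b) b := by
  have hbc : (0:ℝ) < 2 * b * c := by positivity
  have hab : (0:ℝ) < 2 * a * b := by positivity
  set D : ℝ := (a+b+c) * (-a+b+c) * (a-b+c) * (a+b-c) with hDdef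
  have hD : 0 < D := by
    apply mul_pos (mul_pos (mul_pos (by linarith) (by linarith)) (by linarith)) (by linarith)
  have hsD : 0 < Real.sqrt D := Real.sqrt_pos.mpr hD
  set x : ℝ := (b ^ 2 + c ^ 2 - a ^ 2) / (2 * b * c) with hxdef
  set y : ℝ := (a ^ 2 + b ^ 2 - c ^ 2) / (2 * a * b) with hydef
  have hx2 : 1 - x ^ 2 = D / (2 * b * c) ^ 2 := by
    rw [hxdef, hDdef]; field_simp; ring
  have hy2 : 1 - y ^ 2 = D / (2 * a * b) ^ 2 := by
    rw [hydef, hDdef]; field_simp; ring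
  have hx2pos : 0 < 1 - x ^ 2 := by rw [hx2]; positivity
  have hy2pos : 0 < 1 - y ^ 2 := by rw [hy2]; positivity
  have hxl : -1 < x := by nlinarith
  have hxr : x < 1 := by nlinarith
  have hyl : -1 < y := by nlinarith
  have hyr : y < 1 := by nlinarith
  have hsx : Real.sqrt (1 - x ^ 2) = Real.sqrt D / (2 * b * c) := by
    rw [hx2, Real.sqrt_div hD.le, Real.sqrt_sq hbc.le]
  have hsy : Real.sqrt (1 - y ^ 2) = Real.sqrt D / (2 * a * b) := by
    rw [hy2, Real.sqrt_div hD.le, Real.sqrt_sq hab.le]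
  have hsin : Real.sin (Real.arccos y) = Real.sqrt D / (2 * a * b) := by
    rw [Real.sin_arccos, hsy]
  have hcos : Real.cos (Real.arccos y) = y := Real.cos_arccos (by linarith) (by linarith)
  constructor
  · -- first derivative
    have hinner : HasDerivAt (fun s : ℝ => (b ^ 2 + c ^ 2 - s ^ 2) / (2 * b * c))
        (-(2 * a) / (2 * b * c)) a := by
      have h := ((hasDerivAt_pow 2 a).const_sub (b ^ 2 + c ^ 2)).div_const (2 * b * c)
      simpa using h
    have houter : HasDerivAt Real.arccos (-(1 / Real.sqrt (1 - x ^ 2))) x :=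
      Real.hasDerivAt_arccos (by linarith) (by linarith)
    have hcomp := houter.comp a hinner
    convert hcomp using 1
    case e'_4 => rfl
    case e'_5 => rfl
    case e'_8 => rfl
    rw [hsx, hsin]
    field_simp
  · -- second derivative
    have hu : HasDerivAt (fun s : ℝ => s ^ 2 + c ^ 2 - a ^ 2) (2 * b) b := by
      have h := ((hasDerivAt_pow 2 b).add_const (c ^ 2)).sub_const (a ^ 2)
      simpa using h
    have hv : HasDerivAt (fun s : ℝ => 2 * s * c) (2 * c) b := by
      have h := ((hasDerivAt_id b).const_mul 2).mul_const c
      simpa using h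
    have hinner : HasDerivAt (fun s : ℝ => (s ^ 2 + c ^ 2 - a ^ 2) / (2 * s * c))
        ((2 * b * (2 * b * c) - (b ^ 2 + c ^ 2 - a ^ 2) * (2 * c)) / (2 * b * c) ^ 2) b :=
      hu.div hv (ne_of_gt hbc)
    have houter : HasDerivAt Real.arccos (-(1 / Real.sqrt (1 - x ^ 2))) x :=
      Real.hasDerivAt_arccos (by linarith) (by linarith)
    have hcomp := houter.comp b hinner
    convert hcomp using 1
    case e'_4 => rfl
    case e'_5 => rfl
    case e'_8 => rfl
    rw [hcos, hsin, hsx, hydef]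
    field_simp
    ring
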